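/- arXiv:1003.2804 — 4 statements merged into one kernel-verified Lean document; each statement's English description precedes it below -/
import Mathlib

section
/- Let q be the forward quantities for a fixed response sequence y. Then Σ_{v ∈ Fin k} q(T−1, v) = f(y); that is, the forward recursion, which requires only O(T·k²) arithmetic operations, computes the manifest probability defined as a sum over all k^T latent paths. -/
/-!
Latent Markov model with `k ≥ 1` latent states, `l ≥ 1` response categories and
`T + 1 ≥ 1` time occasions (occasions are indexed by `0, …, T`, so that the last
occasion, written `T − 1` in the paper for `T` occasions, is here `T`).
-/

/-- Extension of a partial latent path `ub : {0,…,t} → Fin k` to all of `ℕ`;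
for `s ≤ t` it returns `ub s`. -/
def extPath {k t : ℕ} (u : Fin (t + 1) → Fin k) (s : ℕ) : Fin k :=
  u ⟨min s t, Nat.lt_succ_of_le (min_le_right s t)⟩

/-- The partial weight of a latent path up to occasion `t`:
`π(ub 0) · ∏_{s=1}^{t} π⁽ˢ⁾(ub (s−1), ub s) · ∏_{s=0}^{t} φ⁽ˢ⁾(y s, ub s)`.
For `t = T` (the last occasion) this is the full weight `w(ub)`. -/
noncomputable def pweight {k l : ℕ} (π : Fin k → ℝ) (P : ℕ → Fin k → Fin k → ℝ)
    (Φ : ℕ → Fin l → Fin k → ℝ) (y : ℕ → Fin l) (t : ℕ) (u : ℕ → Fin k) : ℝ :=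
  π (u 0) * (∏ s ∈ Finset.Icc 1 t, P s (u (s - 1)) (u s)) *
    ∏ s ∈ Finset.range (t + 1), Φ s (y s) (u s)

lemma extPath_snoc_of_le {k t : ℕ} (ub : Fin (t + 1) → Fin k) (v : Fin k) {s : ℕ}
    (hs : s ≤ t) : extPath (Fin.snoc ub v) s = extPath ub s := by
  unfold extPath
  have h1 : min s (t + 1) = s := min_eq_left (hs.trans (Nat.le_succ t))
  have h2 : min s t = s := min_eq_left hs
  simp only [h1, h2]
  have : (⟨s, Nat.lt_succ_of_le (hs.trans (Nat.le_succ t))⟩ : Fin (t + 2)) =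
      Fin.castSucc ⟨s, Nat.lt_succ_of_le hs⟩ := rfl
  rw [this, Fin.snoc_castSucc]

lemma extPath_snoc_last {k t : ℕ} (ub : Fin (t + 1) → Fin k) (v : Fin k) :
    extPath (Fin.snoc ub v) (t + 1) = v := by
  unfold extPath
  have : (⟨min (t+1) (t+1), Nat.lt_succ_of_le (min_le_right _ _)⟩ : Fin (t + 2)) =
      Fin.last (t + 1) := by simp [Fin.last]
  rw [this, Fin.snoc_last]

lemma extPath_self {k t : ℕ} (ub : Fin (t + 1) → Fin k) :
    extPath ub t = ub (Fin.last t) := by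
  unfold extPath; congr 1; simp [Fin.last]

lemma pweight_snoc {k l : ℕ} (π : Fin k → ℝ) (P : ℕ → Fin k → Fin k → ℝ)
    (Φ : ℕ → Fin l → Fin k → ℝ) (y : ℕ → Fin l) (t : ℕ)
    (ub : Fin (t + 1) → Fin k) (v : Fin k) :
    pweight π P Φ y (t + 1) (extPath (Fin.snoc ub v)) =
      pweight π P Φ y t (extPath ub) * (P (t + 1) (ub (Fin.last t)) v * Φ (t + 1) (y (t + 1)) v) := by
  unfold pweight
  rw [Finset.prod_Icc_succ_top (Nat.le_add_left 1 t), Finset.prod_range_succ]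
  have e0 : extPath (Fin.snoc ub v) 0 = extPath ub 0 := extPath_snoc_of_le ub v (Nat.zero_le t)
  have eP : ∀ s ∈ Finset.Icc 1 t, P s (extPath (Fin.snoc ub v) (s - 1)) (extPath (Fin.snoc ub v) s)
      = P s (extPath ub (s - 1)) (extPath ub s) := by
    intro s hs
    simp only [Finset.mem_Icc] at hs
    rw [extPath_snoc_of_le ub v hs.2, extPath_snoc_of_le ub v ((Nat.sub_le s 1).trans hs.2)]
  have eΦ : ∀ s ∈ Finset.range (t + 1), Φ s (y s) (extPath (Fin.snoc ub v) s)
      = Φ s (y s) (extPath ub s) := by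
    intro s hs
    simp only [Finset.mem_range] at hs
    rw [extPath_snoc_of_le ub v (Nat.lt_succ_iff.mp hs)]
  rw [Finset.prod_congr rfl eP, Finset.prod_congr rfl eΦ, e0]
  have h1 : extPath (Fin.snoc ub v) (t + 1) = v := extPath_snoc_last ub v
  have h2 : extPath (Fin.snoc ub v) (t + 1 - 1) = ub (Fin.last t) := by
    simp only [Nat.add_sub_cancel]
    rw [extPath_snoc_of_le ub v (le_refl t), extPath_self]
  rw [h1, h2]
  ring


def snocE (k t : ℕ) : ((Fin t → Fin k) × Fin k) ≃ (Fin (t + 1) → Fin k) where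
  toFun p := Fin.snoc p.1 p.2
  invFun f := (Fin.init f, f (Fin.last t))
  left_inv p := by simp
  right_inv f := Fin.snoc_init_self f

@[simp] lemma snocE_apply_last {k t : ℕ} (p : (Fin t → Fin k) × Fin k) :
    (snocE k t p) (Fin.last t) = p.2 := by simp [snocE]

/-- Summing the forward quantities at the last occasion recovers the
manifest probability `f(y)`, defined as the sum of `w(ub)` over all `k^(T+1)` latent paths. -/
theorem sum_forward_eq_manifest
    (k l T : ℕ) (hk : 1 ≤ k) (hl : 1 ≤ l)
    (π : Fin k → ℝ) (P : ℕ → Fin k → Fin k → ℝ) (Φ : ℕ → Fin l → Fin k → ℝ)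
    (y : ℕ → Fin l) (q : ℕ → Fin k → ℝ)
    (hq0 : ∀ u, q 0 u = π u * Φ 0 (y 0) u)
    (hqrec : ∀ t, 1 ≤ t → t ≤ T → ∀ v,
      q t v = (∑ u, q (t - 1) u * P t u v) * Φ t (y t) v) :
    (∑ v, q T v) = ∑ ub : Fin (T + 1) → Fin k, pweight π P Φ y T (extPath ub) := by
  have key : ∀ t, t ≤ T → ∀ v, q t v =
      ∑ ub : Fin t → Fin k, pweight π P Φ y t (extPath (Fin.snoc ub v)) := by
    intro t
    induction t with
    | zero =>
      intro _ v
      rw [Fintype.sum_unique, hq0]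
      unfold pweight
      simp [extPath, Fin.snoc]
    | succ t ih =>
      intro ht v
      rw [hqrec (t + 1) (Nat.le_add_left 1 t) ht v, Nat.add_sub_cancel]
      have := fun u => ih (le_of_lt (Nat.lt_of_succ_le ht)) u
      calc (∑ u, q t u * P (t + 1) u v) * Φ (t + 1) (y (t + 1)) v
          = ∑ u, ∑ ub : Fin t → Fin k,
              pweight π P Φ y t (extPath (Fin.snoc ub u)) * (P (t + 1) u v * Φ (t+1) (y (t+1)) v) := by
            rw [Finset.sum_mul]
            refine Finset.sum_congr rfl fun u _ => ?_
            rw [this u, Finset.sum_mul, Finset.sum_mul]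
            exact Finset.sum_congr rfl fun ub _ => by ring
        _ = ∑ p : (Fin t → Fin k) × Fin k,
              pweight π P Φ y t (extPath (Fin.snoc p.1 p.2)) * (P (t + 1) p.2 v * Φ (t+1) (y (t+1)) v) := by
            rw [Fintype.sum_prod_type_right]
        _ = ∑ ub : Fin (t+1) → Fin k,
              pweight π P Φ y t (extPath ub) * (P (t + 1) (ub (Fin.last t)) v * Φ (t+1) (y (t+1)) v) := by
            refine Fintype.sum_equiv (snocE k t) _ _ fun p => ?_
            simp only [snocE_apply_last]
            rfl
        _ = ∑ ub : Fin (t+1) → Fin k, pweight π P Φ y (t+1) (extPath (Fin.snoc ub v)) := by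
            exact Finset.sum_congr rfl fun ub _ => (pweight_snoc π P Φ y t ub v).symm
  rw [Finset.sum_congr rfl fun v _ => key T (le_refl T) v]
  rw [show (∑ ub : Fin (T + 1) → Fin k, pweight π P Φ y T (extPath ub))
      = ∑ p : (Fin T → Fin k) × Fin k, pweight π P Φ y T (extPath (Fin.snoc p.1 p.2)) from
      (Fintype.sum_equiv (snocE k T) _ _ fun p => rfl).symm,
    Fintype.sum_prod_type_right]
end

section
/- Let q and q* be the forward and backward quantities for a fixed response sequence y. Then for every t with 0 ≤ t ≤ T−1, Σ_{u ∈ Fin k} q(t, u) · q*(t, u) = f(y); in particular the manifest probability can be recovered from the forward–backward decomposition at any time point. -/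
lemma extPath_snoc_lt {k t : ℕ} (ub : Fin t → Fin k) (v : Fin k) {s : ℕ} (hs : s < t) :
    extPath (Fin.snoc ub v) s = ub ⟨s, hs⟩ := by
  simp [extPath, Fin.snoc, Nat.min_eq_left hs.le, hs]

lemma extPath_snoc_ge {k t : ℕ} (ub : Fin t → Fin k) (v : Fin k) {s : ℕ} (hs : t ≤ s) :
    extPath (Fin.snoc ub v) s = v := by
  simp [extPath, Fin.snoc, Nat.min_eq_right hs]

lemma pweight_congr {k l : ℕ} (π : Fin k → ℝ) (P : ℕ → Fin k → Fin k → ℝ)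
    (Φ : ℕ → Fin l → Fin k → ℝ) (y : ℕ → Fin l) (t : ℕ) {w w' : ℕ → Fin k}
    (h : ∀ s ≤ t, w s = w' s) :
    pweight π P Φ y t w = pweight π P Φ y t w' := by
  unfold pweight
  rw [h 0 (Nat.zero_le t)]
  congr 1
  · congr 1
    refine Finset.prod_congr rfl fun s hs => ?_
    simp only [Finset.mem_Icc] at hs
    rw [h (s - 1) (le_trans (Nat.sub_le s 1) hs.2), h s hs.2]
  · refine Finset.prod_congr rfl fun s hs => ?_
    simp only [Finset.mem_range] at hs
    rw [h s (Nat.lt_succ_iff.mp hs)]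

lemma pweight_succ {k l : ℕ} (π : Fin k → ℝ) (P : ℕ → Fin k → Fin k → ℝ)
    (Φ : ℕ → Fin l → Fin k → ℝ) (y : ℕ → Fin l) (t : ℕ) (w : ℕ → Fin k) :
    pweight π P Φ y (t + 1) w =
      pweight π P Φ y t w * (P (t + 1) (w t) (w (t + 1)) * Φ (t + 1) (y (t + 1)) (w (t + 1))) := by
  unfold pweight
  rw [Finset.prod_Icc_succ_top (Nat.succ_le_succ (Nat.zero_le t)), Finset.prod_range_succ]
  simp only [Nat.add_sub_cancel]
  ring

lemma forward_eq {k l T : ℕ} (π : Fin k → ℝ) (P : ℕ → Fin k → Fin k → ℝ)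
    (Φ : ℕ → Fin l → Fin k → ℝ) (y : ℕ → Fin l) (q : ℕ → Fin k → ℝ)
    (hq0 : ∀ u, q 0 u = π u * Φ 0 (y 0) u)
    (hqrec : ∀ t, 1 ≤ t → t ≤ T → ∀ v,
      q t v = (∑ u, q (t - 1) u * P t u v) * Φ t (y t) v) :
    ∀ t ≤ T, ∀ v, q t v =
      ∑ ub : Fin t → Fin k, pweight π P Φ y t (extPath (Fin.snoc ub v)) := by
  intro t
  induction t with
  | zero =>
    intro _ v
    rw [hq0 v]
    have h0 : ∀ ub : Fin 0 → Fin k, extPath (Fin.snoc ub v) 0 = v :=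
      fun ub => extPath_snoc_ge ub v (le_refl 0)
    simp [pweight, h0]
  | succ t ih =>
    intro ht v
    have ht' : t ≤ T := Nat.le_of_succ_le ht
    rw [hqrec (t + 1) (Nat.succ_le_succ (Nat.zero_le t)) ht v]
    simp only [Nat.add_sub_cancel]
    rw [← Equiv.sum_comp (Fin.snocEquiv (fun _ => Fin k))
      (fun ub => pweight π P Φ y (t + 1) (extPath (Fin.snoc ub v))), Fintype.sum_prod_type]
    rw [Finset.sum_mul]
    refine Finset.sum_congr rfl fun u _ => ?_
    rw [ih ht' u, Finset.sum_mul, Finset.sum_mul]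
    refine Finset.sum_congr rfl fun ub _ => ?_
    have key : pweight π P Φ y (t + 1) (extPath (Fin.snoc (Fin.snoc ub u) v))
        = pweight π P Φ y t (extPath (Fin.snoc ub u)) * (P (t + 1) u v * Φ (t + 1) (y (t + 1)) v) := by
      rw [pweight_succ]
      rw [extPath_snoc_ge _ _ (le_refl (t + 1))]
      rw [extPath_snoc_of_le _ _ (le_refl t), extPath_snoc_ge _ _ (le_refl t)]
      rw [pweight_congr π P Φ y t (fun s hs => extPath_snoc_of_le (Fin.snoc ub u) v hs)]
    have he : (Fin.snocEquiv fun _ => Fin k) (u, ub) = Fin.snoc ub u := rfl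
    rw [he, key]
    ring

/-- For every occasion `t`, the forward–backward decomposition
recovers the manifest probability: `Σ_u q(t,u)·q*(t,u) = f(y)`. -/
theorem forward_backward_eq_manifest
    (k l T : ℕ) (hk : 1 ≤ k) (hl : 1 ≤ l)
    (π : Fin k → ℝ) (P : ℕ → Fin k → Fin k → ℝ) (Φ : ℕ → Fin l → Fin k → ℝ)
    (y : ℕ → Fin l) (q qs : ℕ → Fin k → ℝ)
    (hq0 : ∀ u, q 0 u = π u * Φ 0 (y 0) u)
    (hqrec : ∀ t, 1 ≤ t → t ≤ T → ∀ v,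
      q t v = (∑ u, q (t - 1) u * P t u v) * Φ t (y t) v)
    (hqsT : ∀ u, qs T u = 1)
    (hqsrec : ∀ t < T, ∀ u,
      qs t u = ∑ v, P (t + 1) u v * Φ (t + 1) (y (t + 1)) v * qs (t + 1) v) :
    ∀ t ≤ T,
      (∑ u, q t u * qs t u) = ∑ ub : Fin (T + 1) → Fin k, pweight π P Φ y T (extPath ub) := by
  -- the sum is constant in `t`
  have step : ∀ t < T, (∑ u, q t u * qs t u) = ∑ u, q (t + 1) u * qs (t + 1) u := by
    intro t ht
    calc ∑ u, q t u * qs t u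
        = ∑ u, ∑ v, q t u * (P (t + 1) u v * Φ (t + 1) (y (t + 1)) v * qs (t + 1) v) := by
          refine Finset.sum_congr rfl fun u _ => ?_
          rw [hqsrec t ht u, Finset.mul_sum]
      _ = ∑ v, ∑ u, q t u * (P (t + 1) u v * Φ (t + 1) (y (t + 1)) v * qs (t + 1) v) :=
          Finset.sum_comm
      _ = ∑ v, q (t + 1) v * qs (t + 1) v := by
          refine Finset.sum_congr rfl fun v _ => ?_
          rw [hqrec (t + 1) (Nat.succ_le_succ (Nat.zero_le t)) ht v]
          simp only [Nat.add_sub_cancel]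
          rw [Finset.sum_mul, Finset.sum_mul]
          exact Finset.sum_congr rfl fun u _ => by ring
  have hconst : ∀ j, ∀ t, t + j = T → (∑ u, q t u * qs t u) = ∑ u, q T u * qs T u := by
    intro j
    induction j with
    | zero => intro t h; simp only [Nat.add_zero] at h; subst h; rfl
    | succ j ih =>
      intro t h
      rw [step t (by omega)]
      exact ih (t + 1) (by omega)
  intro t ht
  rw [hconst (T - t) t (by omega)]
  simp only [hqsT, mul_one]
  rw [← Equiv.sum_comp (Fin.snocEquiv (fun _ => Fin k))
    (fun ub : Fin (T + 1) → Fin k => pweight π P Φ y T (extPath ub)), Fintype.sum_prod_type]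
  refine Finset.sum_congr rfl fun v _ => ?_
  rw [forward_eq π P Φ y q hq0 hqrec T le_rfl v]
  refine Finset.sum_congr rfl fun ub _ => ?_
  rfl
end

section
/- Let n ≥ 1 and for each i = 1,…,n let g_i, g'_i : Fin K → ℝ be strictly positive. If Σ_{i=1}^n Σ_u (g_i(u)/Σ_v g_i(v)) · log g'_i(u) ≥ Σ_{i=1}^n Σ_u (g_i(u)/Σ_v g_i(v)) · log g_i(u), then Σ_{i=1}^n log(Σ_u g'_i(u)) ≥ Σ_{i=1}^n log(Σ_u g_i(u)). In words: if an EM update does not decrease the expected complete-data log-likelihood, then the observed-data log-likelihood does not decrease, so the EM algorithm is monotone. -/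
lemma em_step (K : ℕ) (hK : 1 ≤ K) (a b : Fin K → ℝ)
    (ha : ∀ u, 0 < a u) (hb : ∀ u, 0 < b u) :
    ∑ u, (a u / ∑ v, a v) * Real.log (b u) - ∑ u, (a u / ∑ v, a v) * Real.log (a u)
      ≤ Real.log (∑ u, b u) - Real.log (∑ u, a u) := by
  have hS : 0 < ∑ v, a v := Finset.sum_pos (fun u _ => ha u) ⟨⟨0, hK⟩, Finset.mem_univ _⟩
  have hS' : 0 < ∑ v, b v := Finset.sum_pos (fun u _ => hb u) ⟨⟨0, hK⟩, Finset.mem_univ _⟩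
  set w : Fin K → ℝ := fun u => a u / ∑ v, a v with hw
  have hw0 : ∀ u ∈ Finset.univ, (0:ℝ) ≤ w u := fun u _ => (div_pos (ha u) hS).le
  have hw1 : ∑ u, w u = 1 := by
    simp [hw, ← Finset.sum_div, div_self hS.ne']
  have hj := (StrictConcaveOn.concaveOn strictConcaveOn_log_Ioi).le_map_sum hw0 hw1
    (p := fun u => b u / a u)
    (fun u _ => Set.mem_Ioi.mpr (div_pos (hb u) (ha u)))
  have key : ∑ u, w u * Real.log (b u / a u) ≤ Real.log (∑ u, b u) - Real.log (∑ u, a u) := by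
    have hsum : ∑ u, w u * (b u / a u) = (∑ u, b u) / ∑ v, a v := by
      have hwe : ∀ u, w u * (b u / a u) = b u / ∑ v, a v := by
        intro u
        have h1 := (ha u).ne'
        have h2 := hS.ne'
        rw [hw]
        field_simp
      simp_rw [hwe]
      rw [← Finset.sum_div]
    calc ∑ u, w u * Real.log (b u / a u) = ∑ u, w u • Real.log (b u / a u) := by simp
      _ ≤ Real.log (∑ u, w u • (b u / a u)) := hj
      _ = Real.log ((∑ u, b u) / ∑ v, a v) := by simp only [smul_eq_mul]; rw [hsum]
      _ = Real.log (∑ u, b u) - Real.log (∑ u, a u) := Real.log_div hS'.ne' hS.ne'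
  calc ∑ u, w u * Real.log (b u) - ∑ u, w u * Real.log (a u)
      = ∑ u, w u * Real.log (b u / a u) := by
        rw [← Finset.sum_sub_distrib]
        apply Finset.sum_congr rfl
        intro u _
        rw [Real.log_div (hb u).ne' (ha u).ne']
        ring
    _ ≤ _ := key

/-- Monotonicity of the EM algorithm: if an update does not decrease
the expected complete-data log-likelihood, then the observed-data log-likelihood does
not decrease. -/
theorem em_monotone
    (n K : ℕ) (hn : 1 ≤ n) (hK : 1 ≤ K)
    (g g' : Fin n → Fin K → ℝ)
    (hg : ∀ i u, 0 < g i u) (hg' : ∀ i u, 0 < g' i u)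
    (h : ∑ i, ∑ u, (g i u / ∑ v, g i v) * Real.log (g' i u) ≥
      ∑ i, ∑ u, (g i u / ∑ v, g i v) * Real.log (g i u)) :
    ∑ i, Real.log (∑ u, g' i u) ≥ ∑ i, Real.log (∑ u, g i u) := by
  have hsum : ∑ i, (∑ u, (g i u / ∑ v, g i v) * Real.log (g' i u)
      - ∑ u, (g i u / ∑ v, g i v) * Real.log (g i u))
      ≤ ∑ i, (Real.log (∑ u, g' i u) - Real.log (∑ u, g i u)) :=
    Finset.sum_le_sum fun i _ => em_step K hK (g i) (g' i) (hg i) (hg' i)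
  rw [Finset.sum_sub_distrib, Finset.sum_sub_distrib] at hsum
  linarith [h]
end

section
/- With V, a, n, π and L as in the multinomial-logit M-step setting, L is twice differentiable and its second derivative (Hessian bilinear form) at every δ, applied to directions h₁, h₂ ∈ EuclideanSpace ℝ (Fin d), equals −n · ( Σ_v π(v, δ) · ⟪V v, h₁⟫ · ⟪V v, h₂⟫ − (Σ_v π(v, δ) · ⟪V v, h₁⟫) · (Σ_v π(v, δ) · ⟪V v, h₂⟫) ); i.e. minus the Hessian equals n · Vᵀ(diag(π) − π πᵀ)V. -/
open scoped RealInnerProductSpace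


namespace MLH18

variable {d k : ℕ}

noncomputable def cvec (V : Fin k → EuclideanSpace ℝ (Fin d)) (v : Fin k) :
    EuclideanSpace ℝ (Fin d) →L[ℝ] ℝ := innerSL ℝ (V v)

noncomputable def pf (V : Fin k → EuclideanSpace ℝ (Fin d)) (v : Fin k)
    (δ : EuclideanSpace ℝ (Fin d)) : ℝ :=
  Real.exp ⟪V v, δ⟫ / ∑ w, Real.exp ⟪V w, δ⟫

noncomputable def mmap (V : Fin k → EuclideanSpace ℝ (Fin d))
    (δ : EuclideanSpace ℝ (Fin d)) : EuclideanSpace ℝ (Fin d) →L[ℝ] ℝ :=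
  ∑ v, pf V v δ • cvec V v

noncomputable def Gmap (V : Fin k → EuclideanSpace ℝ (Fin d)) (a : Fin k → ℝ)
    (δ : EuclideanSpace ℝ (Fin d)) : EuclideanSpace ℝ (Fin d) →L[ℝ] ℝ :=
  ∑ v, a v • (cvec V v - mmap V δ)

noncomputable def Mmap (V : Fin k → EuclideanSpace ℝ (Fin d))
    (δ : EuclideanSpace ℝ (Fin d)) :
    EuclideanSpace ℝ (Fin d) →L[ℝ] (EuclideanSpace ℝ (Fin d) →L[ℝ] ℝ) :=
  ∑ v, (pf V v δ • (cvec V v - mmap V δ)).smulRight (cvec V v)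

lemma Spos (hk : 1 ≤ k) (V : Fin k → EuclideanSpace ℝ (Fin d))
    (δ : EuclideanSpace ℝ (Fin d)) : 0 < ∑ w, Real.exp ⟪V w, δ⟫ := by
  haveI : Nonempty (Fin k) := Fin.pos_iff_nonempty.mp hk
  exact Finset.sum_pos (fun w _ => Real.exp_pos _) Finset.univ_nonempty

lemma pf_pos (hk : 1 ≤ k) (V : Fin k → EuclideanSpace ℝ (Fin d)) (v : Fin k)
    (δ : EuclideanSpace ℝ (Fin d)) : 0 < pf V v δ :=
  div_pos (Real.exp_pos _) (Spos hk V δ)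

lemma hasFDerivAt_S (V : Fin k → EuclideanSpace ℝ (Fin d)) (δ : EuclideanSpace ℝ (Fin d)) :
    HasFDerivAt (fun x => ∑ w, Real.exp ⟪V w, x⟫)
      (∑ w, Real.exp ⟪V w, δ⟫ • cvec V w) δ :=
  HasFDerivAt.fun_sum fun w _ => ((cvec V w).hasFDerivAt (x := δ)).exp

lemma hasFDerivAt_pf (hk : 1 ≤ k) (V : Fin k → EuclideanSpace ℝ (Fin d)) (v : Fin k)
    (δ : EuclideanSpace ℝ (Fin d)) :
    HasFDerivAt (pf V v) (pf V v δ • (cvec V v - mmap V δ)) δ := by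
  have hS := Spos hk V δ
  have hSne : (∑ w, Real.exp ⟪V w, δ⟫) ≠ 0 := ne_of_gt hS
  have hinv : HasFDerivAt (fun x => (∑ w, Real.exp ⟪V w, x⟫)⁻¹)
      ((-((∑ w, Real.exp ⟪V w, δ⟫) ^ 2)⁻¹) • (∑ w, Real.exp ⟪V w, δ⟫ • cvec V w)) δ :=
    (hasDerivAt_inv hSne).comp_hasFDerivAt δ (hasFDerivAt_S V δ)
  have hexp : HasFDerivAt (fun x => Real.exp ⟪V v, x⟫)
      (Real.exp ⟪V v, δ⟫ • cvec V v) δ := ((cvec V v).hasFDerivAt (x := δ)).exp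
  have hmul := hexp.fun_mul hinv
  have heq : (fun x => Real.exp ⟪V v, x⟫ * (∑ w, Real.exp ⟪V w, x⟫)⁻¹) = pf V v := by
    funext x; rw [pf, div_eq_mul_inv]
  rw [heq] at hmul
  refine hmul.congr_fderiv ?_
  apply ContinuousLinearMap.ext; intro h
  simp only [ContinuousLinearMap.smul_apply, ContinuousLinearMap.sub_apply,
    ContinuousLinearMap.add_apply, ContinuousLinearMap.sum_apply, mmap, pf,
    smul_eq_mul]
  have hsum1 : ∑ w, (Real.exp ⟪V w, δ⟫ / ∑ u, Real.exp ⟪V u, δ⟫) * (cvec V w) h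
      = (∑ w, Real.exp ⟪V w, δ⟫ * (cvec V w) h) / ∑ u, Real.exp ⟪V u, δ⟫ := by
    simp_rw [div_mul_eq_mul_div]
    rw [← Finset.sum_div]
  rw [hsum1]
  field_simp
  ring

lemma hasFDerivAt_Lfun (hk : 1 ≤ k) (V : Fin k → EuclideanSpace ℝ (Fin d))
    (a : Fin k → ℝ) (δ : EuclideanSpace ℝ (Fin d)) :
    HasFDerivAt (fun x => ∑ v, a v * Real.log (pf V v x)) (Gmap V a δ) δ := by
  apply HasFDerivAt.fun_sum
  intro v _
  have hlog : HasFDerivAt (fun x => Real.log (pf V v x))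
      ((pf V v δ)⁻¹ • (pf V v δ • (cvec V v - mmap V δ))) δ :=
    (hasFDerivAt_pf hk V v δ).log (ne_of_gt (pf_pos hk V v δ))
  rw [smul_smul, inv_mul_cancel₀ (ne_of_gt (pf_pos hk V v δ)), one_smul] at hlog
  exact hlog.const_mul (a v)

lemma hasFDerivAt_mmap (hk : 1 ≤ k) (V : Fin k → EuclideanSpace ℝ (Fin d))
    (δ : EuclideanSpace ℝ (Fin d)) :
    HasFDerivAt (mmap V) (Mmap V δ) δ :=
  HasFDerivAt.fun_sum fun v _ => (hasFDerivAt_pf hk V v δ).smul_const (cvec V v)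

lemma Gmap_eq (V : Fin k → EuclideanSpace ℝ (Fin d)) (a : Fin k → ℝ) :
    Gmap V a = fun δ => (∑ v, a v • cvec V v) - (∑ v, a v) • mmap V δ := by
  funext δ
  simp only [Gmap, smul_sub, Finset.sum_sub_distrib, Finset.sum_smul]

lemma hasFDerivAt_Gmap (hk : 1 ≤ k) (V : Fin k → EuclideanSpace ℝ (Fin d))
    (a : Fin k → ℝ) (δ : EuclideanSpace ℝ (Fin d)) :
    HasFDerivAt (Gmap V a) ((-(∑ v, a v)) • Mmap V δ) δ := by
  rw [Gmap_eq]
  have h := (hasFDerivAt_const (∑ v, a v • cvec V v) δ).sub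
    ((hasFDerivAt_mmap hk V δ).const_smul (∑ v, a v))
  rw [zero_sub, ← neg_smul] at h
  exact h

end MLH18


open MLH18

/-- Hessian of the multinomial-logit (softmax) component of the
expected complete-data log-likelihood in the M-step: `L` is twice differentiable with
Hessian bilinear form
`(h₁,h₂) ↦ −n·(Σ_v π(v,δ)⟪V v,h₁⟫⟪V v,h₂⟫ − (Σ_v π(v,δ)⟪V v,h₁⟫)(Σ_v π(v,δ)⟪V v,h₂⟫))`,
i.e. minus the Hessian equals `n · Vᵀ(diag(π) − π πᵀ)V`. -/
theorem multinomial_logit_mstep_hessian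
    (d k : ℕ) (hk : 1 ≤ k)
    (V : Fin k → EuclideanSpace ℝ (Fin d))
    (a : Fin k → ℝ) (ha : ∀ v, 0 ≤ a v)
    (p : Fin k → EuclideanSpace ℝ (Fin d) → ℝ)
    (hp : ∀ v δ, p v δ = Real.exp ⟪V v, δ⟫ / ∑ w, Real.exp ⟪V w, δ⟫)
    (L : EuclideanSpace ℝ (Fin d) → ℝ)
    (hL : ∀ δ, L δ = ∑ v, a v * Real.log (p v δ)) :
    Differentiable ℝ L ∧ Differentiable ℝ (fderiv ℝ L) ∧
      ∀ δ h₁ h₂,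
        fderiv ℝ (fderiv ℝ L) δ h₁ h₂ =
          -((∑ w, a w) *
            ((∑ v, p v δ * (⟪V v, h₁⟫ * ⟪V v, h₂⟫)) -
              (∑ v, p v δ * ⟪V v, h₁⟫) * (∑ v, p v δ * ⟪V v, h₂⟫))) := by

  have hLeq : L = fun x => ∑ v, a v * Real.log (pf V v x) := by
    funext x
    rw [hL]
    exact Finset.sum_congr rfl fun v _ => by rw [hp]; rfl
  have hDL : Differentiable ℝ L := by
    rw [hLeq]; exact fun δ => (hasFDerivAt_Lfun hk V a δ).differentiableAt
  have hfd : fderiv ℝ L = Gmap V a := by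
    funext δ; rw [hLeq]; exact (hasFDerivAt_Lfun hk V a δ).fderiv
  have hDG : Differentiable ℝ (fderiv ℝ L) := by
    rw [hfd]; exact fun δ => (hasFDerivAt_Gmap hk V a δ).differentiableAt
  refine ⟨hDL, hDG, fun δ h₁ h₂ => ?_⟩
  rw [hfd, (hasFDerivAt_Gmap hk V a δ).fderiv]
  have hpeq : ∀ v, p v δ = pf V v δ := fun v => hp v δ
  simp only [hpeq]
  simp only [ContinuousLinearMap.smul_apply, ContinuousLinearMap.sum_apply, Mmap,
    ContinuousLinearMap.smulRight_apply, ContinuousLinearMap.sub_apply, mmap,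
    cvec, innerSL_apply_apply, smul_eq_mul]
  have key : ∑ v, pf V v δ * (⟪V v, h₁⟫ - ∑ w, pf V w δ * ⟪V w, h₁⟫) * ⟪V v, h₂⟫
      = (∑ v, pf V v δ * (⟪V v, h₁⟫ * ⟪V v, h₂⟫))
        - (∑ w, pf V w δ * ⟪V w, h₁⟫) * ∑ v, pf V v δ * ⟪V v, h₂⟫ := by
    rw [Finset.mul_sum, ← Finset.sum_sub_distrib]
    exact Finset.sum_congr rfl fun v _ => by ring
  rw [key]
  ring
end
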